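/- Let x₁ = k(1 - q₁E₁/r). If (1 - (d + q₂E₂)/(epk - ak(d + q₂E₂))) < q₁E₁/r < 1 and epk - ak(d+q₂E₂) > 0, then both eigenvalues λ₁ = r - 2rx₁/k - q₁E₁ and λ₂ = -d - q₂E₂ + epx₁/(1 + ax₁) of the Jacobian at the axial equilibrium (x₁, 0) are negative. -/

import Mathlib

theorem stmt_6 (r k p a d e q1 q2 E1 E2 : ℝ)
    (hr : 0 < r) (hk : 0 < k) (hp : 0 < p) (ha : 0 < a) (hd : 0 < d) (he : 0 < e)
    (hq1 : 0 < q1) (hq2 : 0 < q2) (hE1 : 0 ≤ E1) (hE2 : 0 ≤ E2)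
    (hlt : q1 * E1 < r)
    (hden : e * p * k - a * k * (d + q2 * E2) > 0)
    (hlow : 1 - (d + q2 * E2) / (e * p * k - a * k * (d + q2 * E2)) < q1 * E1 / r)
    (hup : q1 * E1 / r < 1) :
    r - 2 * r * (k * (1 - q1 * E1 / r)) / k - q1 * E1 < 0 ∧
    -d - q2 * E2 + e * p * (k * (1 - q1 * E1 / r)) / (1 + a * (k * (1 - q1 * E1 / r))) < 0 := by
  have hk0 : k ≠ 0 := ne_of_gt hk
  have hr0 : r ≠ 0 := ne_of_gt hr
  have hx1 : 0 < k * (1 - q1 * E1 / r) := by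
    apply mul_pos hk; linarith
  have hden2 : 0 < 1 + a * (k * (1 - q1 * E1 / r)) := by positivity
  constructor
  · have : r - 2 * r * (k * (1 - q1 * E1 / r)) / k - q1 * E1 = -(r - q1 * E1) := by
      field_simp; ring
    rw [this]; linarith
  · have key : k * (1 - q1 * E1 / r) * (e * p * k - a * k * (d + q2 * E2)) < k * (d + q2 * E2) := by
      have h1 : 1 - q1 * E1 / r < (d + q2 * E2) / (e * p * k - a * k * (d + q2 * E2)) := by
        linarith
      have h2 := (mul_lt_mul_iff_left₀ hden).2 h1
      rw [div_mul_cancel₀ _ (ne_of_gt hden)] at h2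
      calc k * (1 - q1 * E1 / r) * (e * p * k - a * k * (d + q2 * E2))
          = k * ((1 - q1 * E1 / r) * (e * p * k - a * k * (d + q2 * E2))) := by ring
        _ < k * (d + q2 * E2) := by exact (mul_lt_mul_iff_right₀ hk).2 h2
    have h3 : e * p * (k * (1 - q1 * E1 / r)) / (1 + a * (k * (1 - q1 * E1 / r))) < d + q2 * E2 := by
      rw [div_lt_iff₀ hden2]
      nlinarith [hx1, hden2]
    linarith
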